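/- Let g_q(x) = (1/(q−1))·[1 − ((1+√(1−x))/2)^q − ((1−√(1−x))/2)^q] for 0 ≤ x ≤ 1 and q > 1. Then for 2 ≤ q ≤ 3, g_q is convex on [0,1]. -/

import Mathlib

open Real Set

lemma hasDerivAt_G (p b t : ℝ) (ht : 0 < t) :
    HasDerivAt (fun t : ℝ => t ^ (p-1) - b ^ (p-1) - (p-1)*(t-b)*t^(p-2))
      ((p-1) * t ^ (p-2) - ((p-1) * t^(p-2) + (p-1)*(t-b)*((p-2)*t^(p-3)))) t := by
  have h1 : HasDerivAt (fun t : ℝ => t ^ (p-1)) ((p-1) * t ^ (p-2)) t := by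
    have := Real.hasDerivAt_rpow_const (x := t) (p := p-1) (Or.inl ht.ne')
    simpa [show p - 1 - 1 = p - 2 by ring] using this
  have h2 : HasDerivAt (fun t : ℝ => t ^ (p-2)) ((p-2) * t ^ (p-3)) t := by
    have := Real.hasDerivAt_rpow_const (x := t) (p := p-2) (Or.inl ht.ne')
    simpa [show p - 2 - 1 = p - 3 by ring] using this
  have h3 : HasDerivAt (fun t : ℝ => (p-1)*(t-b)) (p-1) t := by
    simpa using ((hasDerivAt_id t).sub_const b).const_mul (p-1)
  have h4 := h3.mul h2
  have h5 := (h1.sub_const (b ^ (p-1))).sub h4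
  exact h5

lemma key_G (p b : ℝ) (hp1 : 1 ≤ p) (hp2 : p ≤ 2) (hb : 0 < b) {t : ℝ} (htb : b ≤ t) :
    b ^ (p-1) + (p-1)*(t-b)*t^(p-2) ≤ t ^ (p-1) := by
  set G : ℝ → ℝ := fun t : ℝ => t ^ (p-1) - b ^ (p-1) - (p-1)*(t-b)*t^(p-2) with hG
  have hmono : MonotoneOn G (Set.Ici b) := by
    apply monotoneOn_of_deriv_nonneg (convex_Ici b)
    · intro t ht
      exact (hasDerivAt_G p b t (hb.trans_le ht)).continuousAt.continuousWithinAt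
    · intro t ht
      rw [interior_Ici] at ht
      exact (hasDerivAt_G p b t (hb.trans ht)).differentiableAt.differentiableWithinAt
    · intro t ht
      rw [interior_Ici] at ht
      rw [(hasDerivAt_G p b t (hb.trans ht)).deriv]
      have htpos : 0 < t := hb.trans ht
      have : (p-1) * t ^ (p-2) - ((p-1) * t^(p-2) + (p-1)*(t-b)*((p-2)*t^(p-3)))
          = (p-1)*(2-p)*(t-b)*t^(p-3) := by ring
      rw [this]
      have := Real.rpow_nonneg htpos.le (p-3)
      have h1 : (0:ℝ) ≤ p - 1 := by linarith
      have h2 : (0:ℝ) ≤ 2 - p := by linarith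
      have h3 : (0:ℝ) ≤ t - b := by linarith [(mem_Ioi.mp ht).le]
      positivity
  have h0 : G b = 0 := by simp [hG]
  have := hmono (self_mem_Ici) (mem_Ici.mpr htb) htb
  rw [h0] at this
  simp only [hG] at this
  linarith

lemma hasDerivAt_F (p b t : ℝ) (ht : 0 < t) :
    HasDerivAt (fun t : ℝ => 2*(t^p - b^p) - p*(t-b)*(t^(p-1)+b^(p-1)))
      (2*(p * t^(p-1)) - (p * (t^(p-1)+b^(p-1)) + p*(t-b)*((p-1)*t^(p-2)))) t := by
  have h1 : HasDerivAt (fun t : ℝ => t ^ p) (p * t ^ (p-1)) t :=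
    Real.hasDerivAt_rpow_const (x := t) (p := p) (Or.inl ht.ne')
  have h2 : HasDerivAt (fun t : ℝ => t ^ (p-1)) ((p-1) * t ^ (p-2)) t := by
    have := Real.hasDerivAt_rpow_const (x := t) (p := p-1) (Or.inl ht.ne')
    simpa [show p - 1 - 1 = p - 2 by ring] using this
  have h3 : HasDerivAt (fun t : ℝ => p*(t-b)) p t := by
    simpa using ((hasDerivAt_id t).sub_const b).const_mul p
  have h4 := h3.mul (h2.add_const (b ^ (p-1)))
  have h5 := ((h1.sub_const (b^p)).const_mul 2).sub h4
  exact h5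

lemma key_ineq (p a b : ℝ) (hp1 : 1 ≤ p) (hp2 : p ≤ 2) (hb : 0 < b) (hba : b ≤ a) :
    p*(a-b)*(a^(p-1)+b^(p-1)) ≤ 2*(a^p - b^p) := by
  set F : ℝ → ℝ := fun t : ℝ => 2*(t^p - b^p) - p*(t-b)*(t^(p-1)+b^(p-1)) with hF
  have hmono : MonotoneOn F (Set.Ici b) := by
    apply monotoneOn_of_deriv_nonneg (convex_Ici b)
    · intro t ht
      exact (hasDerivAt_F p b t (hb.trans_le ht)).continuousAt.continuousWithinAt
    · intro t ht
      rw [interior_Ici] at ht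
      exact (hasDerivAt_F p b t (hb.trans ht)).differentiableAt.differentiableWithinAt
    · intro t ht
      rw [interior_Ici] at ht
      rw [(hasDerivAt_F p b t (hb.trans ht)).deriv]
      have hkey := key_G p b hp1 hp2 hb (le_of_lt ht)
      have hp0 : (0:ℝ) ≤ p := by linarith
      nlinarith [hkey, hp0]
  have h0 : F b = 0 := by simp [hF]
  have := hmono (self_mem_Ici) (mem_Ici.mpr hba) hba
  rw [h0] at this
  simp only [hF] at this
  linarith

lemma hasDerivAt_f (q x : ℝ) (hq : 1 < q) (hx : x ∈ Set.Ioo (0:ℝ) 1) :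
    HasDerivAt (fun x : ℝ =>
      (1 / (q - 1)) * (1 - ((1 + Real.sqrt (1 - x)) / 2) ^ q
        - ((1 - Real.sqrt (1 - x)) / 2) ^ q))
    ((q/((q-1)*4)) * ((((1+Real.sqrt (1-x))/2)^(q-1) - ((1-Real.sqrt (1-x))/2)^(q-1))
        / Real.sqrt (1-x))) x := by
  obtain ⟨hx1, hx2⟩ := hx
  set s := Real.sqrt (1-x) with hsdef
  have hspos : 0 < s := Real.sqrt_pos.mpr (by linarith)
  have hds : HasDerivAt (fun x : ℝ => Real.sqrt (1-x)) (-(1/(2*s))) x := by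
    have h0 : HasDerivAt (fun x:ℝ => 1 - x) (-1) x := by
      simpa using (hasDerivAt_id x).const_sub 1
    have := (Real.hasDerivAt_sqrt (x := 1-x) (by linarith)).comp x h0
    exact this.congr_deriv (by rw [← hsdef]; ring)
  have ha : HasDerivAt (fun x : ℝ => (1+Real.sqrt (1-x))/2) (-(1/(2*s))/2) x :=
    (hds.const_add 1).div_const 2
  have hb : HasDerivAt (fun x : ℝ => (1-Real.sqrt (1-x))/2) ((1/(2*s))/2) x := by
    have := (hds.const_sub 1).div_const 2
    exact this.congr_deriv (by ring)
  have hA : HasDerivAt (fun x : ℝ => ((1+Real.sqrt (1-x))/2) ^ q)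
      ((q * ((1+s)/2) ^ (q-1)) * (-(1/(2*s))/2)) x :=
    by simpa [Function.comp_def] using (Real.hasDerivAt_rpow_const (x := (1+s)/2) (p := q) (Or.inr hq.le)).comp x ha
  have hB : HasDerivAt (fun x : ℝ => ((1-Real.sqrt (1-x))/2) ^ q)
      ((q * ((1-s)/2) ^ (q-1)) * ((1/(2*s))/2)) x :=
    by simpa [Function.comp_def] using (Real.hasDerivAt_rpow_const (x := (1-s)/2) (p := q) (Or.inr hq.le)).comp x hb
  have hfin := ((hA.const_sub 1).sub hB).const_mul (1/(q-1))
  refine hfin.congr_deriv ?_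
  have hq1 : q - 1 ≠ 0 := by linarith
  field_simp
  ring

lemma hasDerivAt_f1 (q x : ℝ) (hq : 2 ≤ q) (hx : x ∈ Set.Ioo (0:ℝ) 1) :
    HasDerivAt (fun x : ℝ => (q/((q-1)*4)) *
        ((((1+Real.sqrt (1-x))/2)^(q-1) - ((1-Real.sqrt (1-x))/2)^(q-1)) / Real.sqrt (1-x)))
    ((q/((q-1)*4)) *
      ((2*(((1+Real.sqrt (1-x))/2)^(q-1) - ((1-Real.sqrt (1-x))/2)^(q-1))
        - (q-1) * Real.sqrt (1-x) * (((1+Real.sqrt (1-x))/2)^(q-2) + ((1-Real.sqrt (1-x))/2)^(q-2)))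
        / (4 * Real.sqrt (1-x) ^ 3))) x := by
  obtain ⟨hx1, hx2⟩ := hx
  set s := Real.sqrt (1-x) with hsdef
  have hspos : 0 < s := Real.sqrt_pos.mpr (by linarith)
  have hs1 : s < 1 := by
    have h2 : s^2 = 1 - x := Real.sq_sqrt (by linarith)
    nlinarith
  have hapos : 0 < (1+s)/2 := by linarith
  have hbpos : 0 < (1-s)/2 := by linarith
  have hds : HasDerivAt (fun x : ℝ => Real.sqrt (1-x)) (-(1/(2*s))) x := by
    have h0 : HasDerivAt (fun x:ℝ => 1 - x) (-1) x := by
      simpa using (hasDerivAt_id x).const_sub 1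
    have := (Real.hasDerivAt_sqrt (x := 1-x) (by linarith)).comp x h0
    exact this.congr_deriv (by rw [← hsdef]; ring)
  have ha : HasDerivAt (fun x : ℝ => (1+Real.sqrt (1-x))/2) (-(1/(2*s))/2) x :=
    (hds.const_add 1).div_const 2
  have hb : HasDerivAt (fun x : ℝ => (1-Real.sqrt (1-x))/2) ((1/(2*s))/2) x := by
    have := (hds.const_sub 1).div_const 2
    exact this.congr_deriv (by ring)
  have hA1 : HasDerivAt (fun x : ℝ => ((1+Real.sqrt (1-x))/2) ^ (q-1))
      (((q-1) * ((1+s)/2) ^ (q-2)) * (-(1/(2*s))/2)) x := by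
    have := (Real.hasDerivAt_rpow_const (x := (1+s)/2) (p := q-1) (Or.inl hapos.ne')).comp x ha
    simpa [show q-1-1 = q-2 by ring, Function.comp_def] using this
  have hB1 : HasDerivAt (fun x : ℝ => ((1-Real.sqrt (1-x))/2) ^ (q-1))
      (((q-1) * ((1-s)/2) ^ (q-2)) * ((1/(2*s))/2)) x := by
    have := (Real.hasDerivAt_rpow_const (x := (1-s)/2) (p := q-1) (Or.inl hbpos.ne')).comp x hb
    simpa [show q-1-1 = q-2 by ring, Function.comp_def] using this
  have hdiv := ((hA1.sub hB1).div hds hspos.ne').const_mul (q/((q-1)*4))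
  refine hdiv.congr_deriv ?_
  have hq1 : q - 1 ≠ 0 := by linarith
  simp only [Pi.sub_apply, ← hsdef]
  field_simp
  ring

theorem stmt_7 (q : ℝ) (hq2 : 2 ≤ q) (hq3 : q ≤ 3) :
    ConvexOn ℝ (Set.Icc (0 : ℝ) 1) (fun x : ℝ =>
      (1 / (q - 1)) * (1 - ((1 + Real.sqrt (1 - x)) / 2) ^ q
        - ((1 - Real.sqrt (1 - x)) / 2) ^ q)) := by
  have hq1 : (1:ℝ) < q := by linarith
  set f : ℝ → ℝ := fun x : ℝ =>
      (1 / (q - 1)) * (1 - ((1 + Real.sqrt (1 - x)) / 2) ^ q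
        - ((1 - Real.sqrt (1 - x)) / 2) ^ q) with hfdef
  set f1 : ℝ → ℝ := fun x : ℝ => (q/((q-1)*4)) *
        ((((1+Real.sqrt (1-x))/2)^(q-1) - ((1-Real.sqrt (1-x))/2)^(q-1)) / Real.sqrt (1-x))
    with hf1def
  have hev : ∀ x ∈ Set.Ioo (0:ℝ) 1, deriv f =ᶠ[nhds x] f1 := by
    intro x hx
    filter_upwards [isOpen_Ioo.mem_nhds hx] with y hy
    exact (hasDerivAt_f q y hq1 hy).deriv
  apply convexOn_of_deriv2_nonneg (convex_Icc 0 1)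
  · -- continuity
    have hs : Continuous (fun x:ℝ => Real.sqrt (1-x)) :=
      Real.continuous_sqrt.comp (continuous_const.sub continuous_id)
    have hA : Continuous (fun x:ℝ => ((1+Real.sqrt (1-x))/2) ^ q) := by
      rw [continuous_iff_continuousAt]
      intro x
      exact (Real.continuousAt_rpow_const _ q (Or.inr (by linarith))).comp
        (((continuous_const.add hs).div_const 2).continuousAt)
    have hB : Continuous (fun x:ℝ => ((1-Real.sqrt (1-x))/2) ^ q) := by
      rw [continuous_iff_continuousAt]
      intro x
      exact (Real.continuousAt_rpow_const _ q (Or.inr (by linarith))).comp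
        (((continuous_const.sub hs).div_const 2).continuousAt)
    exact (continuous_const.mul ((continuous_const.sub hA).sub hB)).continuousOn
  · rw [interior_Icc]
    intro x hx
    exact (hasDerivAt_f q x hq1 hx).differentiableAt.differentiableWithinAt
  · rw [interior_Icc]
    intro x hx
    exact ((hasDerivAt_f1 q x hq2 hx).differentiableAt.congr_of_eventuallyEq
      (hev x hx)).differentiableWithinAt
  · rw [interior_Icc]
    intro x hx
    have h2 : deriv^[2] f x = deriv (deriv f) x := rfl
    rw [h2, (hev x hx).deriv_eq, (hasDerivAt_f1 q x hq2 hx).deriv]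
    obtain ⟨hx1, hx2⟩ := hx
    set s := Real.sqrt (1-x) with hsdef
    have hspos : 0 < s := Real.sqrt_pos.mpr (by linarith)
    have hs1 : s < 1 := by
      have h2 : s^2 = 1 - x := Real.sq_sqrt (by linarith)
      nlinarith
    have hbpos : 0 < (1-s)/2 := by linarith
    have hba : (1-s)/2 ≤ (1+s)/2 := by linarith
    have hkey := key_ineq (q-1) ((1+s)/2) ((1-s)/2) (by linarith) (by linarith) hbpos hba
    rw [show (1+s)/2 - (1-s)/2 = s by ring, show q-1-1 = q-2 by ring] at hkey
    have hN : 0 ≤ 2*(((1+s)/2)^(q-1) - ((1-s)/2)^(q-1)) - (q-1)*s*(((1+s)/2)^(q-2) + ((1-s)/2)^(q-2)) := by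
      linarith
    have hC : 0 ≤ q/((q-1)*4) := div_nonneg (by linarith) (by linarith)
    exact mul_nonneg hC (div_nonneg hN (by positivity))
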